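/- Let D be a field and R1, R2 normal domains containing D with T = R1⊗_D R2 a normal domain. If a_i is a finitely generated rank-1 reflexive R_i-module for i=1,2, then a1⊗_D a2 is a reflexive T-module, and in Cl(T) one has [a1⊗_{R1}T] + [T⊗_{R2}a2] = [a1⊗_D a2]. -/

import Mathlib

/-!
STATEMENT 17: Let `D` be a field and `R1, R2` normal domains containing `D` with
`T = R1 ⊗[D] R2` a normal domain.  If `a_i` is a finitely generated rank-1 reflexive
`R_i`-module (`i = 1, 2`), then `a1 ⊗[D] a2` is a reflexive `T`-module and
`[T ⊗[R1] a1] + [T ⊗[R2] a2] = [a1 ⊗[D] a2]` in `Cl(T)`, i.e. the double dual of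
`(T ⊗[R1] a1) ⊗[T] (T ⊗[R2] a2)` is isomorphic to `a1 ⊗[D] a2`.
-/

open TensorProduct
universe u

/-- `a` represents an element of the divisor class group: it is a finitely generated
reflexive module of rank 1. -/
def IsDivisorial (R : Type u) [CommRing R] [IsDomain R] (a : Type u) [AddCommGroup a]
    [Module R a] : Prop :=
  Module.Finite R a ∧ Module.IsReflexive R a ∧
    Module.rank (FractionRing R) (FractionRing R ⊗[R] a) = 1

section
variable (D R1 R2 : Type u) [CommRing D] [CommRing R1] [CommRing R2]
  [Algebra D R1] [Algebra D R2]
variable (M1 M2 : Type u) [AddCommGroup M1] [AddCommGroup M2]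
  [Module D M1] [Module R1 M1] [IsScalarTower D R1 M1]
  [Module D M2] [Module R2 M2] [IsScalarTower D R2 M2]

/-- The action of `R2` on `M1 ⊗[D] M2` through the second factor. -/
noncomputable def mod2 : Module R2 (M1 ⊗[D] M2) :=
  letI : SMul R2 (M1 ⊗[D] M2) :=
    ⟨fun r x => (TensorProduct.comm D M1 M2).symm (r • TensorProduct.comm D M1 M2 x)⟩
  Function.Injective.module R2 (TensorProduct.comm D M1 M2).toLinearMap.toAddMonoidHom
    (TensorProduct.comm D M1 M2).injective
    (fun _ _ => (TensorProduct.comm D M1 M2).apply_symm_apply _)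

/-- The natural `T = R1 ⊗[D] R2`-module structure on `M1 ⊗[D] M2`. -/
noncomputable def modT : Module (R1 ⊗[D] R2) (M1 ⊗[D] M2) := by
  letI := mod2 D R2 M1 M2
  have key : ∀ (r : R2) (m : M1) (n : M2), r • (m ⊗ₜ[D] n) = m ⊗ₜ[D] (r • n) := by
    intro r m n
    show (TensorProduct.comm D M1 M2).symm (r • TensorProduct.comm D M1 M2 (m ⊗ₜ[D] n)) = _
    rw [TensorProduct.comm_tmul, TensorProduct.smul_tmul', TensorProduct.comm_symm_tmul]
  letI : IsScalarTower D R2 (M1 ⊗[D] M2) := by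
    constructor
    intro d r x
    induction x using TensorProduct.induction_on with
    | zero => simp
    | tmul m n => rw [key, key, smul_assoc, TensorProduct.tmul_smul]
    | add a b ha hb => simp only [smul_add, ha, hb]
  letI : SMulCommClass R1 R2 (M1 ⊗[D] M2) := by
    constructor
    intro r1 r2 x
    induction x using TensorProduct.induction_on with
    | zero => simp
    | tmul m n => rw [key, TensorProduct.smul_tmul', TensorProduct.smul_tmul', key]
    | add a b ha hb => simp only [smul_add, ha, hb]
  exact TensorProduct.Algebra.module

end

section lemA
variable (D : Type u) [Field D]
variable (R M N V : Type u) [CommRing R] [Algebra D R]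
  [AddCommGroup M] [Module R M]
  [AddCommGroup N] [Module R N] [Module D N] [IsScalarTower D R N]
  [AddCommGroup V] [Module D V]

/-- The natural base-change map `Hom_R(M,N) ⊗[D] V → Hom_R(M, N ⊗[D] V)`. -/
noncomputable def lam : ((M →ₗ[R] N) ⊗[D] V) →ₗ[D] (M →ₗ[R] N ⊗[D] V) :=
  TensorProduct.lift
  { toFun := fun f =>
    { toFun := fun v =>
      { toFun := fun x => f x ⊗ₜ[D] v
        map_add' := fun x y => by simp [TensorProduct.add_tmul]
        map_smul' := fun r x => by simp [TensorProduct.smul_tmul'] }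
      map_add' := fun v w => by ext x; simp [TensorProduct.tmul_add]; rfl
      map_smul' := fun d v => by ext x; simp [TensorProduct.tmul_smul]; rfl }
    map_add' := fun f g => by ext v x; simp [TensorProduct.add_tmul]; rfl
    map_smul' := fun d f => by
      ext v x
      simp [TensorProduct.smul_tmul']
      exact (TensorProduct.smul_tmul' d (f x) v).symm }

@[simp] lemma lam_tmul (f : M →ₗ[R] N) (v : V) (x : M) :
    lam D R M N V (f ⊗ₜ[D] v) x = f x ⊗ₜ[D] v := rfl
end lemA

section lemA2
variable (D : Type u) [Field D]
variable (R M N V : Type u) [CommRing R] [Algebra D R]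
  [AddCommGroup M] [Module R M]
  [AddCommGroup N] [Module R N] [Module D N] [IsScalarTower D R N]
  [AddCommGroup V] [Module D V]
variable {ι : Type u} [DecidableEq ι] (b : Module.Basis ι D V)

noncomputable def EN : (N ⊗[D] V) ≃ₗ[D] (ι →₀ N) :=
  (TensorProduct.congr (LinearEquiv.refl D N) b.repr).trans (TensorProduct.finsuppScalarRight D D N ι)

lemma EN_tmul (n : N) (v : V) (i : ι) : EN D N V b (n ⊗ₜ[D] v) i = b.repr v i • n := by
  simp [EN]

lemma EN_smul (r : R) (w : N ⊗[D] V) : EN D N V b (r • w) = r • EN D N V b w := by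
  induction w using TensorProduct.induction_on with
  | zero => simp
  | tmul n v =>
      ext i
      rw [TensorProduct.smul_tmul']
      simp only [EN_tmul, Finsupp.smul_apply]
      rw [smul_comm]
  | add x y hx hy => rw [smul_add, map_add, hx, hy, map_add, smul_add]

lemma lam_compat (z : (M →ₗ[R] N) ⊗[D] V) (x : M) (i : ι) :
    EN D N V b (lam D R M N V z x) i = (EN D (M →ₗ[R] N) V b z i) x := by
  induction z using TensorProduct.induction_on with
  | zero => simp
  | tmul f v => simp [EN_tmul]
  | add y w hy hw => simp only [map_add, LinearMap.add_apply, Finsupp.add_apply, hy, hw]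

lemma lam_injective : Function.Injective (lam D R M N V) := by
  rw [← LinearMap.ker_eq_bot, LinearMap.ker_eq_bot']
  intro z hz
  classical
  letI b := Module.Basis.ofVectorSpace D V
  haveI : DecidableEq (Module.Basis.ofVectorSpaceIndex D V) := Classical.decEq _
  apply (EN D (M →ₗ[R] N) V b).injective
  rw [map_zero]
  ext i x
  rw [Finsupp.zero_apply, LinearMap.zero_apply, ← lam_compat, hz, LinearMap.zero_apply, map_zero,
    Finsupp.zero_apply]

lemma lam_surjective [Module.Finite R M] : Function.Surjective (lam D R M N V) := by
  classical
  haveI : DecidableEq (Module.Basis.ofVectorSpaceIndex D V) := Classical.decEq _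
  letI b := Module.Basis.ofVectorSpace D V
  set ι := Module.Basis.ofVectorSpaceIndex D V
  intro h
  obtain ⟨n, f, hf⟩ := Module.Finite.exists_fin (R := R) (M := M)
  set S : Finset ι := Finset.univ.biUnion (fun j => (EN D N V b (h (f j))).support) with hS
  have hsupp : ∀ x : M, ∀ i, i ∉ S → EN D N V b (h x) i = 0 := by
    intro x i hi
    have hx : x ∈ Submodule.span R (Set.range f) := by rw [hf]; exact Submodule.mem_top
    induction hx using Submodule.span_induction with
    | mem y hy =>
        obtain ⟨j, rfl⟩ := hy
        rw [← Finsupp.notMem_support_iff]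
        exact fun hmem => hi (Finset.mem_biUnion.mpr ⟨j, Finset.mem_univ j, hmem⟩)
    | zero => simp
    | add y w _ _ hy hw => rw [map_add, map_add, Finsupp.add_apply, hy, hw, add_zero]
    | smul r y _ hy => rw [map_smul, EN_smul, Finsupp.smul_apply, hy, smul_zero]
  set c : ι → (M →ₗ[R] N) := fun i =>
    { toFun := fun x => EN D N V b (h x) i
      map_add' := fun x y => by simp only [map_add, Finsupp.add_apply]
      map_smul' := fun r x => by simp only [map_smul, EN_smul, Finsupp.smul_apply]; rfl } with hc
  refine ⟨∑ i ∈ S, (c i) ⊗ₜ[D] (b i : V), ?_⟩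
  ext x
  apply (EN D N V b).injective
  ext i
  rw [lam_compat D R M N V b, map_sum]
  rw [Finset.sum_apply']
  simp only [EN_tmul, Module.Basis.repr_self]
  by_cases hiS : i ∈ S
  · rw [Finset.sum_eq_single i (fun j _ hj => by
      rw [Finsupp.single_apply, if_neg hj, zero_smul]) (fun hni => absurd hiS hni)]
    rw [Finsupp.single_eq_same, one_smul]
    rfl
  · rw [Finset.sum_eq_zero (fun j hj => by
      rw [Finsupp.single_apply, if_neg (fun e => hiS (by rw [← e]; exact hj)), zero_smul]),
      LinearMap.zero_apply, hsupp x i hiS]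

theorem lam_bijective [Module.Finite R M] : Function.Bijective (lam D R M N V) :=
  ⟨lam_injective D R M N V, lam_surjective D R M N V⟩
end lemA2

section
variable (D R1 R2 : Type u) [CommRing D] [CommRing R1] [CommRing R2]
  [Algebra D R1] [Algebra D R2]
variable (M1 M2 : Type u) [AddCommGroup M1] [AddCommGroup M2]
  [Module D M1] [Module R1 M1] [IsScalarTower D R1 M1]
  [Module D M2] [Module R2 M2] [IsScalarTower D R2 M2]

attribute [local instance] modT

lemma modT_smul_tmul (r1 : R1) (r2 : R2) (x : M1) (y : M2) :
    (r1 ⊗ₜ[D] r2) • (x ⊗ₜ[D] y) = (r1 • x) ⊗ₜ[D] (r2 • y) := rfl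
end

section kappa
variable (D R1 R2 : Type u) [Field D] [CommRing R1] [CommRing R2]
  [Algebra D R1] [Algebra D R2]
variable (M1 M2 : Type u) [AddCommGroup M1] [AddCommGroup M2]
  [Module D M1] [Module R1 M1] [IsScalarTower D R1 M1]
  [Module D M2] [Module R2 M2] [IsScalarTower D R2 M2]

attribute [local instance 100] modT
attribute [local instance] Algebra.TensorProduct.rightAlgebra

noncomputable local instance : SMulCommClass R2 R1 (R1 ⊗[D] R2) :=
  ⟨fun r2 r1 t => by
    rw [Algebra.smul_def, Algebra.smul_def, Algebra.smul_def, Algebra.smul_def, mul_left_comm]⟩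

lemma right_smul_def (r2 : R2) (t : R1 ⊗[D] R2) : r2 • t = (1 ⊗ₜ[D] r2) * t := by
  rw [Algebra.smul_def]; rfl

lemma left_smul_def (r1 : R1) (t : R1 ⊗[D] R2) : r1 • t = (r1 ⊗ₜ[D] 1) * t := by
  rw [Algebra.smul_def]; rfl

/-- Extensionality for `T`-linear maps out of `M1 ⊗[D] M2`. -/
lemma tlin_ext {P : Type u} [AddCommGroup P] [Module (R1 ⊗[D] R2) P]
    {F G : (M1 ⊗[D] M2) →ₗ[R1 ⊗[D] R2] P}
    (h : ∀ x y, F (x ⊗ₜ[D] y) = G (x ⊗ₜ[D] y)) : F = G := by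
  apply LinearMap.ext
  intro z
  induction z using TensorProduct.induction_on with
  | zero => rw [map_zero, map_zero]
  | tmul x y => exact h x y
  | add a b ha hb => rw [map_add, map_add, ha, hb]

/-- A `D`-linear map out of `M1 ⊗[D] M2` commuting with the pure-tensor scalar
multiplications is `T`-linear. -/
lemma modT_linear {P : Type u} [AddCommGroup P] [Module (R1 ⊗[D] R2) P]
    (F : (M1 ⊗[D] M2) →+ P)
    (h : ∀ (r1 : R1) (r2 : R2) (x : M1) (y : M2),
      F ((r1 • x) ⊗ₜ[D] (r2 • y)) = (r1 ⊗ₜ[D] r2) • F (x ⊗ₜ[D] y)) :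
    ∀ (t : R1 ⊗[D] R2) (z : M1 ⊗[D] M2), F (t • z) = t • F z := by
  intro t z
  induction t using TensorProduct.induction_on with
  | zero => rw [zero_smul, zero_smul, map_zero]
  | tmul r1 r2 =>
      induction z using TensorProduct.induction_on with
      | zero => rw [smul_zero, map_zero, smul_zero]
      | tmul x y => rw [modT_smul_tmul, h]
      | add a b ha hb => rw [smul_add, map_add, map_add, ha, hb, smul_add]
  | add s s' hs hs' => rw [add_smul, map_add, hs, hs', add_smul]

/-- The value of the Künneth map: the `T`-linear functional `f ⊗ g` on `M1 ⊗[D] M2`. -/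
noncomputable def kap0 (f : M1 →ₗ[R1] R1) (g : M2 →ₗ[R2] R2) :
    (M1 ⊗[D] M2) →ₗ[R1 ⊗[D] R2] (R1 ⊗[D] R2) where
  toFun := TensorProduct.map (f.restrictScalars D) (g.restrictScalars D)
  map_add' := map_add _
  map_smul' := by
    intro t z
    refine modT_linear D R1 R2 M1 M2
      (TensorProduct.map (f.restrictScalars D) (g.restrictScalars D)).toAddMonoidHom ?_ t z
    intro r1 r2 x y
    simp only [LinearMap.toAddMonoidHom_coe, TensorProduct.map_tmul,
      LinearMap.coe_restrictScalars, map_smul, smul_eq_mul]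
    rw [Algebra.TensorProduct.tmul_mul_tmul]

@[simp] lemma kap0_tmul (f : M1 →ₗ[R1] R1) (g : M2 →ₗ[R2] R2) (x : M1) (y : M2) :
    kap0 D R1 R2 M1 M2 f g (x ⊗ₜ[D] y) = f x ⊗ₜ[D] g y := rfl

/-- The Künneth map `Hom(M1,R1) ⊗[D] Hom(M2,R2) → Hom_T(M1 ⊗ M2, T)`. -/
noncomputable def kap : ((M1 →ₗ[R1] R1) ⊗[D] (M2 →ₗ[R2] R2)) →ₗ[D]
    ((M1 ⊗[D] M2) →ₗ[R1 ⊗[D] R2] (R1 ⊗[D] R2)) :=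
  TensorProduct.lift
  { toFun := fun f =>
    { toFun := fun g => kap0 D R1 R2 M1 M2 f g
      map_add' := fun g g' => tlin_ext D R1 R2 M1 M2 (fun x y => by
        simp [TensorProduct.tmul_add])
      map_smul' := fun d g => tlin_ext D R1 R2 M1 M2 (fun x y => by
        simp [TensorProduct.tmul_smul]) }
    map_add' := fun f f' => by
      ext g : 1
      exact tlin_ext D R1 R2 M1 M2 (fun x y => by simp [TensorProduct.add_tmul])
    map_smul' := fun d f => by
      ext g : 1
      exact tlin_ext D R1 R2 M1 M2 (fun x y => by
        simp [TensorProduct.smul_tmul']) }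

@[simp] lemma kap_tmul (f : M1 →ₗ[R1] R1) (g : M2 →ₗ[R2] R2) (x : M1) (y : M2) :
    kap D R1 R2 M1 M2 (f ⊗ₜ[D] g) (x ⊗ₜ[D] y) = f x ⊗ₜ[D] g y := rfl

/-- `kap` is `T`-equivariant. -/
lemma kap_smul (t : R1 ⊗[D] R2) (w : (M1 →ₗ[R1] R1) ⊗[D] (M2 →ₗ[R2] R2)) :
    kap D R1 R2 M1 M2 (t • w) = t • kap D R1 R2 M1 M2 w := by
  induction t using TensorProduct.induction_on with
  | zero => exact (congrArg (kap D R1 R2 M1 M2) (zero_smul (R1 ⊗[D] R2) w)).trans ((map_zero _).trans (zero_smul (R1 ⊗[D] R2) _).symm)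
  | tmul r1 r2 =>
      induction w using TensorProduct.induction_on with
      | zero => rw [smul_zero, map_zero, smul_zero]
      | tmul f g =>
          rw [modT_smul_tmul]
          refine tlin_ext D R1 R2 M1 M2 (fun x y => ?_)
          simp only [LinearMap.smul_apply, kap_tmul, smul_eq_mul,
            Algebra.TensorProduct.tmul_mul_tmul]
      | add a b ha hb => rw [smul_add, map_add, ha, hb, map_add, smul_add]
  | add s s' hs hs' => rw [add_smul, map_add, hs, hs', add_smul]

/-- The base-change map `R1 ⊗[D] Hom_{R2}(M2, R2) → Hom_{R2}(M2, T)`. -/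
noncomputable def bet : (R1 ⊗[D] (M2 →ₗ[R2] R2)) →ₗ[D] (M2 →ₗ[R2] (R1 ⊗[D] R2)) :=
  TensorProduct.lift
  { toFun := fun r =>
    { toFun := fun g =>
      { toFun := fun y => r ⊗ₜ[D] g y
        map_add' := fun y y' => by simp only [map_add, TensorProduct.tmul_add]
        map_smul' := fun r2 y => by
          simp only [map_smul, RingHom.id_apply]
          rw [right_smul_def, smul_eq_mul, ← one_mul r,
            Algebra.TensorProduct.tmul_mul_tmul]
          simp only [one_mul] }
      map_add' := fun g g' => by ext y; simp [TensorProduct.tmul_add]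
      map_smul' := fun d g => by ext y; simp [TensorProduct.tmul_smul] }
    map_add' := fun r r' => by ext g y; simp [TensorProduct.add_tmul]
    map_smul' := fun d r => by ext g y; simp [TensorProduct.smul_tmul'] }

@[simp] lemma bet_tmul (r : R1) (g : M2 →ₗ[R2] R2) (y : M2) :
    bet D R1 R2 M2 (r ⊗ₜ[D] g) y = r ⊗ₜ[D] g y := rfl

lemma comm_r2_smul (r2 : R2) (w : R2 ⊗[D] R1) :
    TensorProduct.comm D R2 R1 (r2 • w) = r2 • TensorProduct.comm D R2 R1 w := by
  induction w using TensorProduct.induction_on with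
  | zero => simp
  | tmul a b =>
      rw [TensorProduct.smul_tmul', TensorProduct.comm_tmul, TensorProduct.comm_tmul,
        right_smul_def, ← mul_one b, Algebra.TensorProduct.tmul_mul_tmul, smul_eq_mul,
        mul_one, one_mul]
  | add a b ha hb => rw [smul_add, map_add, map_add, ha, hb, smul_add]

lemma bet_eq_lam (w : R1 ⊗[D] (M2 →ₗ[R2] R2)) (y : M2) :
    bet D R1 R2 M2 w y = TensorProduct.comm D R2 R1
      ((lam D R2 M2 R2 R1 (TensorProduct.comm D R1 (M2 →ₗ[R2] R2) w)) y) := by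
  induction w using TensorProduct.induction_on with
  | zero => simp
  | tmul r g => rw [bet_tmul, TensorProduct.comm_tmul, lam_tmul, TensorProduct.comm_tmul]
  | add a b ha hb => rw [map_add, LinearMap.add_apply, ha, hb, map_add, map_add,
      LinearMap.add_apply, map_add]

lemma bet_injective : Function.Injective (bet D R1 R2 M2) := by
  intro w w' h
  apply (TensorProduct.comm D R1 (M2 →ₗ[R2] R2)).injective
  apply lam_injective D R2 M2 R2 R1
  ext y
  apply (TensorProduct.comm D R2 R1).injective
  rw [← bet_eq_lam, ← bet_eq_lam, h]

lemma bet_surjective [Module.Finite R2 M2] : Function.Surjective (bet D R1 R2 M2) := by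
  intro h
  set h' : M2 →ₗ[R2] (R2 ⊗[D] R1) :=
    { toFun := fun y => (TensorProduct.comm D R2 R1).symm (h y)
      map_add' := fun y y' => by simp only [map_add]
      map_smul' := fun r2 y => by
        simp only [map_smul, RingHom.id_apply]
        apply (TensorProduct.comm D R2 R1).injective
        rw [comm_r2_smul, LinearEquiv.apply_symm_apply, LinearEquiv.apply_symm_apply] } with hh'
  obtain ⟨w', hw'⟩ := lam_surjective D R2 M2 R2 R1 h'
  refine ⟨(TensorProduct.comm D R1 (M2 →ₗ[R2] R2)).symm w', ?_⟩
  ext y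
  rw [bet_eq_lam, LinearEquiv.apply_symm_apply, hw']
  exact (TensorProduct.comm D R2 R1).apply_symm_apply (h y)

lemma bet_bijective [Module.Finite R2 M2] : Function.Bijective (bet D R1 R2 M2) :=
  ⟨bet_injective D R1 R2 M2, bet_surjective D R1 R2 M2⟩

lemma bet_r1_smul (r1 : R1) (w : R1 ⊗[D] (M2 →ₗ[R2] R2)) :
    bet D R1 R2 M2 (r1 • w) = r1 • bet D R1 R2 M2 w := by
  induction w using TensorProduct.induction_on with
  | zero => simp
  | tmul r g =>
      ext y
      rw [TensorProduct.smul_tmul', bet_tmul, LinearMap.smul_apply, bet_tmul,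
        left_smul_def, ← mul_one r1, Algebra.TensorProduct.tmul_mul_tmul, smul_eq_mul,
        mul_one, one_mul]
  | add a b ha hb => rw [smul_add, map_add, map_add, ha, hb, smul_add]

lemma kap_bet_lam (z : (M1 →ₗ[R1] R1) ⊗[D] (M2 →ₗ[R2] R2)) (x : M1) (y : M2) :
    kap D R1 R2 M1 M2 z (x ⊗ₜ[D] y)
      = bet D R1 R2 M2 (lam D R1 M1 R1 (M2 →ₗ[R2] R2) z x) y := by
  induction z using TensorProduct.induction_on with
  | zero => simp
  | tmul f g => rw [kap_tmul, lam_tmul, bet_tmul]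
  | add a b ha hb => rw [map_add, LinearMap.add_apply, ha, hb, map_add, LinearMap.add_apply,
      map_add, LinearMap.add_apply]

lemma kap_injective : Function.Injective (kap D R1 R2 M1 M2) := by
  intro z z' h
  apply lam_injective D R1 M1 R1 (M2 →ₗ[R2] R2)
  ext x : 1
  apply bet_injective D R1 R2 M2
  ext y
  rw [← kap_bet_lam, ← kap_bet_lam, h]

/-- Currying a `T`-linear functional on `M1 ⊗[D] M2`. -/
noncomputable def phiAux (h : (M1 ⊗[D] M2) →ₗ[R1 ⊗[D] R2] (R1 ⊗[D] R2)) (x : M1) :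
    M2 →ₗ[R2] (R1 ⊗[D] R2) where
  toFun y := h (x ⊗ₜ[D] y)
  map_add' y y' := by simp only [TensorProduct.tmul_add, map_add]
  map_smul' r2 y := by
    have e1 : x ⊗ₜ[D] (r2 • y) = ((1 : R1) ⊗ₜ[D] r2) • (x ⊗ₜ[D] y) := by
      rw [modT_smul_tmul, one_smul]
    simp only [RingHom.id_apply]
    rw [e1, map_smul, right_smul_def, smul_eq_mul]

@[simp] lemma phiAux_apply (h : (M1 ⊗[D] M2) →ₗ[R1 ⊗[D] R2] (R1 ⊗[D] R2)) (x : M1) (y : M2) :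
    phiAux D R1 R2 M1 M2 h x y = h (x ⊗ₜ[D] y) := rfl

lemma phiAux_add (h : (M1 ⊗[D] M2) →ₗ[R1 ⊗[D] R2] (R1 ⊗[D] R2)) (x x' : M1) :
    phiAux D R1 R2 M1 M2 h (x + x') = phiAux D R1 R2 M1 M2 h x + phiAux D R1 R2 M1 M2 h x' := by
  ext y
  simp only [phiAux_apply, LinearMap.add_apply, TensorProduct.add_tmul, map_add]

lemma phiAux_smul (h : (M1 ⊗[D] M2) →ₗ[R1 ⊗[D] R2] (R1 ⊗[D] R2)) (r1 : R1) (x : M1) :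
    phiAux D R1 R2 M1 M2 h (r1 • x) = r1 • phiAux D R1 R2 M1 M2 h x := by
  ext y
  simp only [phiAux_apply, LinearMap.smul_apply]
  have e1 : (r1 • x) ⊗ₜ[D] y = (r1 ⊗ₜ[D] (1 : R2)) • (x ⊗ₜ[D] y) := by
    rw [modT_smul_tmul, one_smul]
  rw [e1, map_smul, left_smul_def, smul_eq_mul]

lemma kap_surjective [Module.Finite R1 M1] [Module.Finite R2 M2] :
    Function.Surjective (kap D R1 R2 M1 M2) := by
  intro h
  have hbet := bet_surjective D R1 R2 M2
  have hbetinv : ∀ p, bet D R1 R2 M2 (Function.surjInv hbet p) = p :=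
    fun p => Function.surjInv_eq hbet p
  set w : M1 →ₗ[R1] (R1 ⊗[D] (M2 →ₗ[R2] R2)) :=
    { toFun := fun x => Function.surjInv hbet (phiAux D R1 R2 M1 M2 h x)
      map_add' := fun x x' => by
        apply bet_injective D R1 R2 M2
        rw [map_add, hbetinv, hbetinv, hbetinv, phiAux_add]
      map_smul' := fun r1 x => by
        apply bet_injective D R1 R2 M2
        rw [RingHom.id_apply, bet_r1_smul, hbetinv, hbetinv, phiAux_smul] } with hwdef
  obtain ⟨z, hz⟩ := lam_surjective D R1 M1 R1 (M2 →ₗ[R2] R2) w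
  refine ⟨z, tlin_ext D R1 R2 M1 M2 (fun x y => ?_)⟩
  rw [kap_bet_lam, hz]
  show bet D R1 R2 M2 (Function.surjInv hbet (phiAux D R1 R2 M1 M2 h x)) y = _
  rw [hbetinv, phiAux_apply]

theorem kap_bijective [Module.Finite R1 M1] [Module.Finite R2 M2] :
    Function.Bijective (kap D R1 R2 M1 M2) :=
  ⟨kap_injective D R1 R2 M1 M2, kap_surjective D R1 R2 M1 M2⟩

end kappa

lemma dual_finite' (R M : Type u) [CommRing R] [IsNoetherianRing R] [AddCommGroup M]
    [Module R M] [Module.Finite R M] : Module.Finite R (Module.Dual R M) := by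
  obtain ⟨n, f, hf⟩ := Module.Finite.exists_fin' R M
  exact Module.Finite.of_injective f.dualMap (LinearMap.dualMap_injective_of_surjective hf)

section reflexive
variable (D R1 R2 : Type u) [Field D] [CommRing R1] [CommRing R2]
  [Algebra D R1] [Algebra D R2]
variable (M1 M2 : Type u) [AddCommGroup M1] [AddCommGroup M2]
  [Module D M1] [Module R1 M1] [IsScalarTower D R1 M1]
  [Module D M2] [Module R2 M2] [IsScalarTower D R2 M2]

attribute [local instance 100] modT

section fieldmaps
variable (D : Type u) [Field D] {X Y X' Y' : Type u} [AddCommGroup X] [AddCommGroup Y]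
  [AddCommGroup X'] [AddCommGroup Y'] [Module D X] [Module D Y] [Module D X'] [Module D Y']

lemma map_injective_field (f : X →ₗ[D] X') (g : Y →ₗ[D] Y')
    (hf : Function.Injective f) (hg : Function.Injective g) :
    Function.Injective (TensorProduct.map f g) := by
  rw [← LinearMap.lTensor_comp_rTensor, LinearMap.coe_comp]
  exact (Module.Flat.lTensor_preserves_injective_linearMap g hg).comp
    (Module.Flat.rTensor_preserves_injective_linearMap f hf)

lemma map_surjective_field (f : X →ₗ[D] X') (g : Y →ₗ[D] Y')
    (hf : Function.Surjective f) (hg : Function.Surjective g) :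
    Function.Surjective (TensorProduct.map f g) := by
  rw [← LinearMap.lTensor_comp_rTensor, LinearMap.coe_comp]
  exact (LinearMap.lTensor_surjective _ hg).comp (LinearMap.rTensor_surjective _ hf)
end fieldmaps

section reflexive2
variable (D R1 R2 : Type u) [Field D] [CommRing R1] [CommRing R2]
  [Algebra D R1] [Algebra D R2]
variable (M1 M2 : Type u) [AddCommGroup M1] [AddCommGroup M2]
  [Module D M1] [Module R1 M1] [IsScalarTower D R1 M1]
  [Module D M2] [Module R2 M2] [IsScalarTower D R2 M2]

attribute [local instance 100] modT

set_option maxHeartbeats 4000000 in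
theorem reflexive_tensor [IsNoetherianRing R1] [IsNoetherianRing R2]
    [Module.Finite R1 M1] [Module.Finite R2 M2]
    [Module.IsReflexive R1 M1] [Module.IsReflexive R2 M2] :
    Module.IsReflexive (R1 ⊗[D] R2) (M1 ⊗[D] M2) := by
  haveI : Module.Finite R1 (Module.Dual R1 M1) := dual_finite' R1 M1
  haveI : Module.Finite R2 (Module.Dual R2 M2) := dual_finite' R2 M2
  have hminj : Function.Injective (TensorProduct.map
      (LinearMap.restrictScalars D (Module.Dual.eval R1 M1))
      (LinearMap.restrictScalars D (Module.Dual.eval R2 M2))) :=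
    map_injective_field D _ _ (Module.bijective_dual_eval R1 M1).injective
      (Module.bijective_dual_eval R2 M2).injective
  have hmsurj : Function.Surjective (TensorProduct.map
      (LinearMap.restrictScalars D (Module.Dual.eval R1 M1))
      (LinearMap.restrictScalars D (Module.Dual.eval R2 M2))) :=
    map_surjective_field D _ _ (Module.bijective_dual_eval R1 M1).surjective
      (Module.bijective_dual_eval R2 M2).surjective
  have bridge : ∀ (z : M1 ⊗[D] M2) (w : (M1 →ₗ[R1] R1) ⊗[D] (M2 →ₗ[R2] R2)),
      Module.Dual.eval (R1 ⊗[D] R2) (M1 ⊗[D] M2) z (kap D R1 R2 M1 M2 w)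
        = kap D R1 R2 (Module.Dual R1 M1) (Module.Dual R2 M2)
            (TensorProduct.map (LinearMap.restrictScalars D (Module.Dual.eval R1 M1))
              (LinearMap.restrictScalars D (Module.Dual.eval R2 M2)) z) w := by
    intro z w
    induction w using TensorProduct.induction_on with
    | zero => rw [map_zero, map_zero, map_zero]
    | tmul f g =>
        induction z using TensorProduct.induction_on with
        | zero => rw [map_zero, LinearMap.zero_apply, map_zero, map_zero, LinearMap.zero_apply]
        | tmul x y =>
            rw [Module.Dual.eval_apply, kap_tmul, TensorProduct.map_tmul]
            rw [LinearMap.coe_restrictScalars, LinearMap.coe_restrictScalars, kap_tmul,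
              Module.Dual.eval_apply, Module.Dual.eval_apply]
        | add a b ha hb =>
            rw [map_add, LinearMap.add_apply, ha, hb, map_add, map_add, LinearMap.add_apply]
    | add a b ha hb =>
        rw [map_add, map_add, ha, hb, map_add]
  constructor
  constructor
  · rw [injective_iff_map_eq_zero]
    intro z hz
    apply hminj
    rw [map_zero]
    apply kap_injective D R1 R2 (Module.Dual R1 M1) (Module.Dual R2 M2)
    rw [map_zero]
    apply LinearMap.ext
    intro w
    rw [← bridge, hz, LinearMap.zero_apply, LinearMap.zero_apply]
  · intro Φ
    obtain ⟨w0, hw0⟩ := kap_surjective D R1 R2 (Module.Dual R1 M1) (Module.Dual R2 M2)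
      { toFun := fun w => Φ (kap D R1 R2 M1 M2 w)
        map_add' := fun w w' => by simp only [map_add]
        map_smul' := fun t w => by
          simp only [RingHom.id_apply]
          rw [kap_smul, map_smul] }
    obtain ⟨z, hz⟩ := hmsurj w0
    refine ⟨z, ?_⟩
    apply LinearMap.ext
    intro ψ
    obtain ⟨w, rfl⟩ := kap_surjective D R1 R2 M1 M2 ψ
    rw [bridge, hz, hw0]
    rfl
end reflexive2
section phieq
variable (D R1 R2 : Type u) [Field D] [CommRing R1] [CommRing R2]
  [Algebra D R1] [Algebra D R2]
variable (a1 a2 : Type u) [AddCommGroup a1] [AddCommGroup a2]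
  [Module D a1] [Module R1 a1] [IsScalarTower D R1 a1]
  [Module D a2] [Module R2 a2] [IsScalarTower D R2 a2]

attribute [local instance 100] modT
attribute [local instance] Algebra.TensorProduct.rightAlgebra

lemma oneTmulSmul1 (d : D) (x : a1) :
    (1 : R1 ⊗[D] R2) ⊗ₜ[R1] (d • x) = algebraMap D (R1 ⊗[D] R2) d • ((1 : R1 ⊗[D] R2) ⊗ₜ[R1] x) := by
  rw [← algebraMap_smul R1 d x, TensorProduct.tmul_smul,
    ← algebraMap_smul (R1 ⊗[D] R2) (algebraMap D R1 d)
      ((1 : R1 ⊗[D] R2) ⊗ₜ[R1] x),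
    ← IsScalarTower.algebraMap_apply D R1 (R1 ⊗[D] R2)]

noncomputable local instance : IsScalarTower D R2 (R1 ⊗[D] R2) :=
  IsScalarTower.of_algebraMap_eq (fun d => by
    show (algebraMap D (R1 ⊗[D] R2)) d = (1 : R1) ⊗ₜ[D] (algebraMap D R2 d)
    rw [Algebra.TensorProduct.algebraMap_apply, Algebra.algebraMap_eq_smul_one,
      Algebra.algebraMap_eq_smul_one, TensorProduct.smul_tmul])

lemma oneTmulSmul2 (d : D) (y : a2) :
    (1 : R1 ⊗[D] R2) ⊗ₜ[R2] (d • y) = algebraMap D (R1 ⊗[D] R2) d • ((1 : R1 ⊗[D] R2) ⊗ₜ[R2] y) := by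
  rw [← algebraMap_smul R2 d y, TensorProduct.tmul_smul,
    ← algebraMap_smul (R1 ⊗[D] R2) (algebraMap D R2 d)
      ((1 : R1 ⊗[D] R2) ⊗ₜ[R2] y),
    ← IsScalarTower.algebraMap_apply D R2 (R1 ⊗[D] R2)]

lemma smul_tmul_smul' (s s' : R1 ⊗[D] R2) (u : (R1 ⊗[D] R2) ⊗[R1] a1)
    (v : (R1 ⊗[D] R2) ⊗[R2] a2) :
    (s • u) ⊗ₜ[R1 ⊗[D] R2] (s' • v) = (s * s') • (u ⊗ₜ[R1 ⊗[D] R2] v) := by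
  rw [TensorProduct.tmul_smul, ← TensorProduct.smul_tmul', smul_smul, mul_comm s' s]

/-- abbreviation for the double base-change module. -/
noncomputable abbrev XX : Type u := ((R1 ⊗[D] R2) ⊗[R1] a1) ⊗[R1 ⊗[D] R2] ((R1 ⊗[D] R2) ⊗[R2] a2)

noncomputable def H0a (x : a1) : a2 →+ XX D R1 R2 a1 a2 where
  toFun y := ((1 : R1 ⊗[D] R2) ⊗ₜ[R1] x) ⊗ₜ[R1 ⊗[D] R2] ((1 : R1 ⊗[D] R2) ⊗ₜ[R2] y)
  map_zero' := by
    show ((1 : R1 ⊗[D] R2) ⊗ₜ[R1] x) ⊗ₜ[R1 ⊗[D] R2] ((1 : R1 ⊗[D] R2) ⊗ₜ[R2] (0 : a2)) = 0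
    rw [TensorProduct.tmul_zero, TensorProduct.tmul_zero]
  map_add' y y' := by
    show ((1 : R1 ⊗[D] R2) ⊗ₜ[R1] x) ⊗ₜ[R1 ⊗[D] R2] ((1 : R1 ⊗[D] R2) ⊗ₜ[R2] (y + y')) = _
    rw [TensorProduct.tmul_add, TensorProduct.tmul_add]

@[simp] lemma H0a_apply (x : a1) (y : a2) :
    H0a D R1 R2 a1 a2 x y
      = ((1 : R1 ⊗[D] R2) ⊗ₜ[R1] x) ⊗ₜ[R1 ⊗[D] R2] ((1 : R1 ⊗[D] R2) ⊗ₜ[R2] y) := rfl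

noncomputable def H0b : a1 →+ (a2 →+ XX D R1 R2 a1 a2) where
  toFun x := H0a D R1 R2 a1 a2 x
  map_zero' := AddMonoidHom.ext (fun y => by
    simp only [H0a_apply, AddMonoidHom.zero_apply]
    rw [show (1 : R1 ⊗[D] R2) ⊗ₜ[R1] (0 : a1) = 0 from TensorProduct.tmul_zero a1 _,
      TensorProduct.zero_tmul])
  map_add' x x' := AddMonoidHom.ext (fun y => by
    simp only [AddMonoidHom.add_apply, H0a_apply]
    rw [TensorProduct.tmul_add, TensorProduct.add_tmul])

@[simp] lemma H0b_apply (x : a1) (y : a2) :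
    H0b D R1 R2 a1 a2 x y
      = ((1 : R1 ⊗[D] R2) ⊗ₜ[R1] x) ⊗ₜ[R1 ⊗[D] R2] ((1 : R1 ⊗[D] R2) ⊗ₜ[R2] y) := rfl

/-- The canonical additive map `a1 ⊗[D] a2 → (T ⊗[R1] a1) ⊗[T] (T ⊗[R2] a2)`. -/
noncomputable def H0 : (a1 ⊗[D] a2) →+ XX D R1 R2 a1 a2 :=
  TensorProduct.liftAddHom (H0b D R1 R2 a1 a2)
    (fun d x y => by
      simp only [H0b_apply]
      rw [oneTmulSmul1, oneTmulSmul2, TensorProduct.smul_tmul])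

@[simp] lemma H0_tmul (x : a1) (y : a2) :
    H0 D R1 R2 a1 a2 (x ⊗ₜ[D] y)
      = ((1 : R1 ⊗[D] R2) ⊗ₜ[R1] x) ⊗ₜ[R1 ⊗[D] R2] ((1 : R1 ⊗[D] R2) ⊗ₜ[R2] y) :=
  TensorProduct.liftAddHom_tmul _ _ _ _

lemma oneTmulR1 (r1 : R1) (x : a1) :
    (1 : R1 ⊗[D] R2) ⊗ₜ[R1] (r1 • x) = (r1 ⊗ₜ[D] (1 : R2)) • ((1 : R1 ⊗[D] R2) ⊗ₜ[R1] x) := by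
  rw [TensorProduct.tmul_smul, ← algebraMap_smul (R1 ⊗[D] R2) r1]
  rfl

lemma oneTmulR2 (r2 : R2) (y : a2) :
    (1 : R1 ⊗[D] R2) ⊗ₜ[R2] (r2 • y) = ((1 : R1) ⊗ₜ[D] r2) • ((1 : R1 ⊗[D] R2) ⊗ₜ[R2] y) := by
  rw [TensorProduct.tmul_smul, ← algebraMap_smul (R1 ⊗[D] R2) r2]
  rfl

/-- The canonical `T`-linear map `a1 ⊗[D] a2 → (T ⊗[R1] a1) ⊗[T] (T ⊗[R2] a2)`. -/
noncomputable def HH : (a1 ⊗[D] a2) →ₗ[R1 ⊗[D] R2] XX D R1 R2 a1 a2 where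
  toFun := H0 D R1 R2 a1 a2
  map_add' := map_add _
  map_smul' := by
    intro t z
    simp only [RingHom.id_apply]
    refine modT_linear D R1 R2 a1 a2 (P := XX D R1 R2 a1 a2) (H0 D R1 R2 a1 a2) (fun r1 r2 x y => ?_) t z
    rw [H0_tmul, H0_tmul, oneTmulR1, oneTmulR2, smul_tmul_smul',
      Algebra.TensorProduct.tmul_mul_tmul, mul_one, one_mul]

@[simp] lemma HH_tmul (x : a1) (y : a2) :
    HH D R1 R2 a1 a2 (x ⊗ₜ[D] y)
      = ((1 : R1 ⊗[D] R2) ⊗ₜ[R1] x) ⊗ₜ[R1 ⊗[D] R2] ((1 : R1 ⊗[D] R2) ⊗ₜ[R2] y) :=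
  H0_tmul D R1 R2 a1 a2 x y

noncomputable def Tha (y : a2) (t : R1 ⊗[D] R2) : a1 →+ (a1 ⊗[D] a2) where
  toFun x := t • (x ⊗ₜ[D] y)
  map_zero' := by
    show t • ((0 : a1) ⊗ₜ[D] y) = 0
    rw [TensorProduct.zero_tmul, smul_zero]
  map_add' x x' := by
    show t • ((x + x') ⊗ₜ[D] y) = _
    rw [TensorProduct.add_tmul, smul_add]

@[simp] lemma Tha_apply (y : a2) (t : R1 ⊗[D] R2) (x : a1) :
    Tha D R1 R2 a1 a2 y t x = t • (x ⊗ₜ[D] y) := rfl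

noncomputable def Thb (y : a2) : (R1 ⊗[D] R2) →+ (a1 →+ (a1 ⊗[D] a2)) where
  toFun t := Tha D R1 R2 a1 a2 y t
  map_zero' := AddMonoidHom.ext (fun x => by
    simp only [Tha_apply, AddMonoidHom.zero_apply, zero_smul])
  map_add' t t' := AddMonoidHom.ext (fun x => by
    simp only [AddMonoidHom.add_apply, Tha_apply]
    rw [add_smul])

@[simp] lemma Thb_apply (y : a2) (t : R1 ⊗[D] R2) (x : a1) :
    Thb D R1 R2 a1 a2 y t x = t • (x ⊗ₜ[D] y) := rfl

/-- Retraction, level 1. -/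
noncomputable def Th (y : a2) : ((R1 ⊗[D] R2) ⊗[R1] a1) →+ (a1 ⊗[D] a2) :=
  TensorProduct.liftAddHom (Thb D R1 R2 a1 a2 y)
    (fun r1 t x => by
      simp only [Thb_apply]
      have e1 : (r1 • x) ⊗ₜ[D] y = (r1 ⊗ₜ[D] (1 : R2)) • (x ⊗ₜ[D] y) := by
        rw [modT_smul_tmul, one_smul]
      have e2 : r1 • t = (r1 ⊗ₜ[D] (1 : R2)) * t := by
        rw [Algebra.smul_def]
        rfl
      rw [e1, e2, mul_smul, smul_comm])

@[simp] lemma Th_tmul (y : a2) (t : R1 ⊗[D] R2) (x : a1) :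
    Th D R1 R2 a1 a2 y (t ⊗ₜ[R1] x) = t • (x ⊗ₜ[D] y) :=
  TensorProduct.liftAddHom_tmul _ _ _ _

lemma Th_r2_smul (r2 : R2) (y : a2) (u : (R1 ⊗[D] R2) ⊗[R1] a1) :
    ((1 : R1) ⊗ₜ[D] r2) • Th D R1 R2 a1 a2 y u = Th D R1 R2 a1 a2 (r2 • y) u := by
  induction u using TensorProduct.induction_on with
  | zero => rw [map_zero, map_zero, smul_zero]
  | tmul t x =>
      rw [Th_tmul, Th_tmul, ← mul_smul, mul_comm, mul_smul]
      congr 1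
      rw [modT_smul_tmul, one_smul]
  | add a b ha hb => rw [map_add, map_add, smul_add, ha, hb]

lemma Th_add_y (y y' : a2) (u : (R1 ⊗[D] R2) ⊗[R1] a1) :
    Th D R1 R2 a1 a2 (y + y') u = Th D R1 R2 a1 a2 y u + Th D R1 R2 a1 a2 y' u := by
  induction u using TensorProduct.induction_on with
  | zero => rw [map_zero, map_zero, map_zero, add_zero]
  | tmul t x => rw [Th_tmul, Th_tmul, Th_tmul, TensorProduct.tmul_add, smul_add]
  | add a b ha hb =>
      rw [map_add, map_add, map_add, ha, hb]
      abel

lemma Th_zero_y (u : (R1 ⊗[D] R2) ⊗[R1] a1) :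
    Th D R1 R2 a1 a2 (0 : a2) u = 0 := by
  induction u using TensorProduct.induction_on with
  | zero => rw [map_zero]
  | tmul t x => rw [Th_tmul, TensorProduct.tmul_zero, smul_zero]
  | add a b ha hb => rw [map_add, ha, hb, add_zero]

lemma Th_T_smul (t : R1 ⊗[D] R2) (y : a2) (u : (R1 ⊗[D] R2) ⊗[R1] a1) :
    Th D R1 R2 a1 a2 y (t • u) = t • Th D R1 R2 a1 a2 y u := by
  induction u using TensorProduct.induction_on with
  | zero => rw [smul_zero, map_zero, smul_zero]
  | tmul t' x => rw [TensorProduct.smul_tmul', Th_tmul, Th_tmul, smul_eq_mul, mul_smul]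
  | add a b ha hb => rw [smul_add, map_add, map_add, ha, hb, smul_add]

noncomputable def Psa (u : (R1 ⊗[D] R2) ⊗[R1] a1) (s : R1 ⊗[D] R2) :
    a2 →+ (a1 ⊗[D] a2) where
  toFun y := s • Th D R1 R2 a1 a2 y u
  map_zero' := by
    show s • Th D R1 R2 a1 a2 (0 : a2) u = 0
    rw [Th_zero_y, smul_zero]
  map_add' y y' := by
    show s • Th D R1 R2 a1 a2 (y + y') u = _
    rw [Th_add_y, smul_add]

@[simp] lemma Psa_apply (u : (R1 ⊗[D] R2) ⊗[R1] a1) (s : R1 ⊗[D] R2) (y : a2) :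
    Psa D R1 R2 a1 a2 u s y = s • Th D R1 R2 a1 a2 y u := rfl

noncomputable def Psb (u : (R1 ⊗[D] R2) ⊗[R1] a1) :
    (R1 ⊗[D] R2) →+ (a2 →+ (a1 ⊗[D] a2)) where
  toFun s := Psa D R1 R2 a1 a2 u s
  map_zero' := AddMonoidHom.ext (fun y => by
    simp only [Psa_apply, AddMonoidHom.zero_apply, zero_smul])
  map_add' s s' := AddMonoidHom.ext (fun y => by
    simp only [AddMonoidHom.add_apply, Psa_apply]
    rw [add_smul])

@[simp] lemma Psb_apply (u : (R1 ⊗[D] R2) ⊗[R1] a1) (s : R1 ⊗[D] R2) (y : a2) :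
    Psb D R1 R2 a1 a2 u s y = s • Th D R1 R2 a1 a2 y u := rfl

/-- Retraction, level 2. -/
noncomputable def Ps (u : (R1 ⊗[D] R2) ⊗[R1] a1) :
    ((R1 ⊗[D] R2) ⊗[R2] a2) →+ (a1 ⊗[D] a2) :=
  TensorProduct.liftAddHom (Psb D R1 R2 a1 a2 u)
    (fun r2 s y => by
      simp only [Psb_apply]
      have e2 : r2 • s = ((1 : R1) ⊗ₜ[D] r2) * s := by
        rw [Algebra.smul_def]
        rfl
      rw [e2, mul_comm, mul_smul, Th_r2_smul])

@[simp] lemma Ps_tmul (u : (R1 ⊗[D] R2) ⊗[R1] a1) (s : R1 ⊗[D] R2) (y : a2) :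
    Ps D R1 R2 a1 a2 u (s ⊗ₜ[R2] y) = s • Th D R1 R2 a1 a2 y u :=
  TensorProduct.liftAddHom_tmul _ _ _ _

lemma Ps_add (u u' : (R1 ⊗[D] R2) ⊗[R1] a1) (v : (R1 ⊗[D] R2) ⊗[R2] a2) :
    Ps D R1 R2 a1 a2 (u + u') v = Ps D R1 R2 a1 a2 u v + Ps D R1 R2 a1 a2 u' v := by
  induction v using TensorProduct.induction_on with
  | zero => rw [map_zero, map_zero, map_zero, add_zero]
  | tmul s y => rw [Ps_tmul, Ps_tmul, Ps_tmul, map_add, smul_add]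
  | add a b ha hb =>
      rw [map_add, map_add, map_add, ha, hb]
      abel

lemma Ps_zero (v : (R1 ⊗[D] R2) ⊗[R2] a2) :
    Ps D R1 R2 a1 a2 (0 : (R1 ⊗[D] R2) ⊗[R1] a1) v = 0 := by
  induction v using TensorProduct.induction_on with
  | zero => rw [map_zero]
  | tmul s y => rw [Ps_tmul, map_zero, smul_zero]
  | add a b ha hb => rw [map_add, ha, hb, add_zero]

lemma Ps_smul (t : R1 ⊗[D] R2) (u : (R1 ⊗[D] R2) ⊗[R1] a1)
    (v : (R1 ⊗[D] R2) ⊗[R2] a2) :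
    Ps D R1 R2 a1 a2 (t • u) v = Ps D R1 R2 a1 a2 u (t • v) := by
  induction v using TensorProduct.induction_on with
  | zero => rw [map_zero, smul_zero, map_zero]
  | tmul s y =>
      rw [Ps_tmul, TensorProduct.smul_tmul', Ps_tmul, smul_eq_mul, Th_T_smul,
        ← mul_smul, mul_comm s t]
  | add a b ha hb => rw [smul_add, map_add, map_add, ha, hb]

/-- Retraction `(T ⊗[R1] a1) ⊗[T] (T ⊗[R2] a2) → a1 ⊗[D] a2`. -/
noncomputable def G0 : XX D R1 R2 a1 a2 →+ (a1 ⊗[D] a2) :=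
  TensorProduct.liftAddHom
    { toFun := fun u => Ps D R1 R2 a1 a2 u
      map_zero' := AddMonoidHom.ext (fun v => Ps_zero D R1 R2 a1 a2 v)
      map_add' := fun u u' => AddMonoidHom.ext (fun v => Ps_add D R1 R2 a1 a2 u u' v) }
    (fun t u v => Ps_smul D R1 R2 a1 a2 t u v)

@[simp] lemma G0_tmul (u : (R1 ⊗[D] R2) ⊗[R1] a1) (v : (R1 ⊗[D] R2) ⊗[R2] a2) :
    G0 D R1 R2 a1 a2 (u ⊗ₜ[R1 ⊗[D] R2] v) = Ps D R1 R2 a1 a2 u v :=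
  TensorProduct.liftAddHom_tmul _ _ _ _

lemma G0_HH (z : a1 ⊗[D] a2) : G0 D R1 R2 a1 a2 (HH D R1 R2 a1 a2 z) = z := by
  induction z using TensorProduct.induction_on with
  | zero => rw [map_zero, map_zero]
  | tmul x y => rw [HH_tmul, G0_tmul, Ps_tmul, Th_tmul, one_smul, one_smul]
  | add a b ha hb => rw [map_add, map_add, ha, hb]

lemma HH_injective : Function.Injective (HH D R1 R2 a1 a2) := by
  intro z z' h
  rw [← G0_HH D R1 R2 a1 a2 z, ← G0_HH D R1 R2 a1 a2 z', h]

lemma HH_surjective : Function.Surjective (HH D R1 R2 a1 a2) := by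
  intro xi
  induction xi using TensorProduct.induction_on with
  | zero => exact ⟨0, map_zero _⟩
  | tmul u v =>
      induction u using TensorProduct.induction_on with
      | zero =>
          exact ⟨0, by rw [map_zero, TensorProduct.zero_tmul]⟩
      | tmul t x =>
          induction v using TensorProduct.induction_on with
          | zero => exact ⟨0, by rw [map_zero, TensorProduct.tmul_zero]⟩
          | tmul s y =>
              refine ⟨(t * s) • (x ⊗ₜ[D] y), ?_⟩
              rw [map_smul, HH_tmul, ← smul_tmul_smul', TensorProduct.smul_tmul',
                TensorProduct.smul_tmul', smul_eq_mul, smul_eq_mul, mul_one, mul_one]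
          | add v1 v2 h1 h2 =>
              obtain ⟨z1, hz1⟩ := h1
              obtain ⟨z2, hz2⟩ := h2
              exact ⟨z1 + z2, by rw [map_add, hz1, hz2, TensorProduct.tmul_add]⟩
      | add u1 u2 h1 h2 =>
          obtain ⟨z1, hz1⟩ := h1
          obtain ⟨z2, hz2⟩ := h2
          exact ⟨z1 + z2, by rw [map_add, hz1, hz2, TensorProduct.add_tmul]⟩
  | add x1 x2 h1 h2 =>
      obtain ⟨z1, hz1⟩ := h1
      obtain ⟨z2, hz2⟩ := h2
      exact ⟨z1 + z2, by rw [map_add, hz1, hz2]⟩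

/-- `a1 ⊗[D] a2 ≃ (T ⊗[R1] a1) ⊗[T] (T ⊗[R2] a2)` as `T`-modules. -/
noncomputable def HHequiv : (a1 ⊗[D] a2) ≃ₗ[R1 ⊗[D] R2] XX D R1 R2 a1 a2 :=
  LinearEquiv.ofBijective (HH D R1 R2 a1 a2)
    ⟨HH_injective D R1 R2 a1 a2, HH_surjective D R1 R2 a1 a2⟩

end phieq

theorem statement17 (D R1 R2 : Type u) [Field D]
    [CommRing R1] [CommRing R2] [IsDomain R1] [IsDomain R2]
    [IsIntegrallyClosed R1] [IsIntegrallyClosed R2]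
    [IsNoetherianRing R1] [IsNoetherianRing R2] [Algebra D R1] [Algebra D R2]
    [IsDomain (R1 ⊗[D] R2)] [IsIntegrallyClosed (R1 ⊗[D] R2)]
    [IsNoetherianRing (R1 ⊗[D] R2)]
    (a1 a2 : Type u) [AddCommGroup a1] [Module R1 a1] [AddCommGroup a2] [Module R2 a2]
    (ha1 : IsDivisorial R1 a1) (ha2 : IsDivisorial R2 a2) :
    letI : Algebra R2 (R1 ⊗[D] R2) := Algebra.TensorProduct.rightAlgebra
    letI : Module D a1 := Module.compHom a1 (algebraMap D R1)
    letI : Module D a2 := Module.compHom a2 (algebraMap D R2)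
    letI : IsScalarTower D R1 a1 := IsScalarTower.of_algebraMap_smul fun _ _ => rfl
    letI : IsScalarTower D R2 a2 := IsScalarTower.of_algebraMap_smul fun _ _ => rfl
    letI : Module (R1 ⊗[D] R2) (a1 ⊗[D] a2) := modT D R1 R2 a1 a2
    -- `a1 ⊗[D] a2` is a reflexive `T`-module :
    Module.IsReflexive (R1 ⊗[D] R2) (a1 ⊗[D] a2) ∧
    -- `[T ⊗[R1] a1] + [T ⊗[R2] a2] = [a1 ⊗[D] a2]` in `Cl(T)` :
    Nonempty (Module.Dual (R1 ⊗[D] R2) (Module.Dual (R1 ⊗[D] R2)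
        (((R1 ⊗[D] R2) ⊗[R1] a1) ⊗[R1 ⊗[D] R2] ((R1 ⊗[D] R2) ⊗[R2] a2)))
      ≃ₗ[R1 ⊗[D] R2] (a1 ⊗[D] a2)) := by
  letI : Algebra R2 (R1 ⊗[D] R2) := Algebra.TensorProduct.rightAlgebra
  letI : Module D a1 := Module.compHom a1 (algebraMap D R1)
  letI : Module D a2 := Module.compHom a2 (algebraMap D R2)
  letI : IsScalarTower D R1 a1 := IsScalarTower.of_algebraMap_smul fun _ _ => rfl
  letI : IsScalarTower D R2 a2 := IsScalarTower.of_algebraMap_smul fun _ _ => rfl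
  letI : Module (R1 ⊗[D] R2) (a1 ⊗[D] a2) := modT D R1 R2 a1 a2
  haveI : Module.Finite R1 a1 := ha1.1
  haveI : Module.IsReflexive R1 a1 := ha1.2.1
  haveI : Module.Finite R2 a2 := ha2.1
  haveI : Module.IsReflexive R2 a2 := ha2.2.1
  haveI hrefl : Module.IsReflexive (R1 ⊗[D] R2) (a1 ⊗[D] a2) :=
    reflexive_tensor D R1 R2 a1 a2
  refine ⟨hrefl, ?_⟩
  exact ⟨((HHequiv D R1 R2 a1 a2).dualMap.dualMap).symm.trans
    (Module.evalEquiv (R1 ⊗[D] R2) (a1 ⊗[D] a2)).symm⟩
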